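/- There exists a unique r ∈ (0,1) satisfying log(r) + √(1-r²) - log(1 + √(1-r²)) - r + 1 = 0, and this unique solution lies in the interval (0.443, 0.444). -/

import Mathlib

open Real Set

private lemma expLB : (2.06671 : ℝ) < Real.exp 0.72601339 := by
  have h := Real.sum_le_exp_of_nonneg (x := 0.72601339) (by norm_num) 12
  refine lt_of_lt_of_le ?_ h
  simp only [Finset.sum_range_succ, Finset.sum_range_zero]
  norm_num [Nat.factorial]

private lemma expUB : Real.exp 0.72676081 < (2.06838 : ℝ) := by
  have h := Real.exp_bound' (x := 0.72676081) (by norm_num) (by norm_num) (n := 12) (by norm_num)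
  refine lt_of_le_of_lt h ?_
  simp only [Finset.sum_range_succ, Finset.sum_range_zero]
  norm_num [Nat.factorial]

private lemma expLB' : (4.27033062 : ℝ) < Real.exp 1.45202678 := by
  have h : (1.45202678 : ℝ) = 0.72601339 + 0.72601339 := by norm_num
  rw [h, Real.exp_add]
  nlinarith [expLB, Real.exp_pos (0.72601339 : ℝ)]

private lemma expUB' : Real.exp 1.45352162 < (4.2782 : ℝ) := by
  have h : (1.45352162 : ℝ) = 0.72676081 + 0.72676081 := by norm_num
  rw [h, Real.exp_add]
  nlinarith [expUB, Real.exp_pos (0.72676081 : ℝ)]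

noncomputable def gfun : ℝ → ℝ := fun x =>
  Real.log x + Real.sqrt (1 - x ^ 2) - Real.log (1 + Real.sqrt (1 - x ^ 2)) - x + 1

private lemma sqrt_bounds {r a b : ℝ} (h : 0 ≤ 1 - r ^ 2) (ha : 0 ≤ a) (hb : 0 ≤ b)
    (hla : a ^ 2 < 1 - r ^ 2) (hlb : 1 - r ^ 2 < b ^ 2) :
    a < Real.sqrt (1 - r ^ 2) ∧ Real.sqrt (1 - r ^ 2) < b := by
  have hs0 : 0 ≤ Real.sqrt (1 - r ^ 2) := Real.sqrt_nonneg _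
  have hs2 : Real.sqrt (1 - r ^ 2) ^ 2 = 1 - r ^ 2 := Real.sq_sqrt h
  constructor <;> nlinarith

private lemma gB : 0 < gfun 0.444 := by
  set s := Real.sqrt (1 - (0.444 : ℝ) ^ 2) with hsdef
  obtain ⟨hsl, hsu⟩ := sqrt_bounds (r := (0.444:ℝ)) (a := 0.89602678) (b := 0.89602679)
    (by norm_num) (by norm_num) (by norm_num) (by norm_num) (by norm_num)
  have hs0 : (0:ℝ) < 1 + s := by linarith
  have key : Real.log (1 + s) < Real.log 0.444 + s + 1 - 0.444 := by
    rw [Real.log_lt_iff_lt_exp hs0]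
    have h1 : Real.log 0.444 + s + 1 - 0.444 = Real.log 0.444 + (s + 0.556) := by ring
    rw [h1, Real.exp_add, Real.exp_log (by norm_num)]
    have h2 : Real.exp 1.45202678 < Real.exp (s + 0.556) := by
      apply Real.exp_lt_exp.mpr; linarith
    nlinarith [expLB']
  unfold gfun
  rw [← hsdef]
  linarith

private lemma gA : gfun 0.443 < 0 := by
  set s := Real.sqrt (1 - (0.443 : ℝ) ^ 2) with hsdef
  obtain ⟨hsl, hsu⟩ := sqrt_bounds (r := (0.443:ℝ)) (a := 0.89652161) (b := 0.89652162)
    (by norm_num) (by norm_num) (by norm_num) (by norm_num) (by norm_num)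
  have hs0 : (0:ℝ) < 1 + s := by linarith
  have key : Real.log 0.443 + s + 1 - 0.443 < Real.log (1 + s) := by
    rw [Real.lt_log_iff_exp_lt hs0]
    have h1 : Real.log 0.443 + s + 1 - 0.443 = Real.log 0.443 + (s + 0.557) := by ring
    rw [h1, Real.exp_add, Real.exp_log (by norm_num)]
    have h2 : Real.exp (s + 0.557) < Real.exp 1.45352162 := by
      apply Real.exp_lt_exp.mpr; linarith
    nlinarith [expUB', Real.exp_pos (s + 0.557)]
  unfold gfun
  rw [← hsdef]
  linarith

private lemma gderiv {r : ℝ} (h0 : 0 < r) (h1 : r < 1) :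
    HasDerivAt gfun (1 / r - 1 - r / (1 + Real.sqrt (1 - r ^ 2))) r := by
  have hr2 : (0:ℝ) < 1 - r ^ 2 := by nlinarith
  set s := Real.sqrt (1 - r ^ 2) with hsdef
  have hs : 0 < s := Real.sqrt_pos.mpr hr2
  have hp : HasDerivAt (fun x : ℝ => 1 - x ^ 2) (-(2 * r)) r := by
    simpa using (hasDerivAt_pow 2 r).const_sub 1
  have hsq : HasDerivAt (fun x : ℝ => Real.sqrt (1 - x ^ 2))
      (1 / (2 * s) * (-(2 * r))) r :=
    (Real.hasDerivAt_sqrt hr2.ne').comp r hp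
  have hlog1 : HasDerivAt Real.log r⁻¹ r := Real.hasDerivAt_log h0.ne'
  have hlog2 : HasDerivAt (fun x : ℝ => Real.log (1 + Real.sqrt (1 - x ^ 2)))
      ((1 + s)⁻¹ * (1 / (2 * s) * (-(2 * r)))) r := by
    have := (Real.hasDerivAt_log (by positivity : (1:ℝ) + s ≠ 0)).comp r (hsq.const_add 1)
    simpa [Function.comp_def] using this
  have hf : HasDerivAt gfun
      (r⁻¹ + 1 / (2 * s) * (-(2 * r)) - (1 + s)⁻¹ * (1 / (2 * s) * (-(2 * r))) - 1) r := by
    have := ((((hlog1.add hsq).sub hlog2).sub (hasDerivAt_id r)).add_const 1)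
    unfold gfun
    simpa using this
  convert hf using 1
  have h1s : (1:ℝ) + s ≠ 0 := by positivity
  field_simp
  ring

private lemma gcont {S : Set ℝ} (hS : ∀ x ∈ S, 0 < x) : ContinuousOn gfun S := by
  have hsqrt : Continuous fun x : ℝ => Real.sqrt (1 - x ^ 2) :=
    Real.continuous_sqrt.comp (by continuity)
  have h1 : ContinuousOn (fun x : ℝ => Real.log x) S :=
    ContinuousOn.log continuousOn_id fun x hx => (hS x hx).ne'
  have h2 : ContinuousOn (fun x : ℝ => Real.log (1 + Real.sqrt (1 - x ^ 2))) S := by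
    apply ContinuousOn.log ((continuous_const.add hsqrt).continuousOn)
    intro x _
    exact (by positivity : (0:ℝ) < 1 + Real.sqrt (1 - x ^ 2)).ne'
  exact ((((h1.add hsqrt.continuousOn).sub h2).sub continuousOn_id).add continuousOn_const)

private lemma gfun_deriv_eq {x : ℝ} (h0 : 0 < x) (h1 : x < 1) :
    deriv gfun x = (Real.sqrt (1 - x ^ 2) - x) / x := by
  have hr2 : (0:ℝ) < 1 - x ^ 2 := by nlinarith
  set s := Real.sqrt (1 - x ^ 2) with hsdef
  have hs : 0 < s := Real.sqrt_pos.mpr hr2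
  have hs2 : s ^ 2 = 1 - x ^ 2 := Real.sq_sqrt hr2.le
  rw [(gderiv h0 h1).deriv]
  have h1s : (0:ℝ) < 1 + s := by linarith
  field_simp
  nlinarith [hs2]

theorem exists_unique_root_r_infty :
    ∃ r : ℝ, (r ∈ Set.Ioo (0:ℝ) 1 ∧
        Real.log r + Real.sqrt (1 - r ^ 2) - Real.log (1 + Real.sqrt (1 - r ^ 2)) - r + 1 = 0) ∧
      r ∈ Set.Ioo (0.443 : ℝ) 0.444 ∧
      ∀ r' : ℝ, r' ∈ Set.Ioo (0:ℝ) 1 →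
        Real.log r' + Real.sqrt (1 - r' ^ 2) - Real.log (1 + Real.sqrt (1 - r' ^ 2)) - r' + 1 = 0 →
        r' = r := by
  set c := Real.sqrt (1/2) with hcdef
  have hc0 : 0 < c := Real.sqrt_pos.mpr (by norm_num)
  have hc2 : c ^ 2 = 1/2 := Real.sq_sqrt (by norm_num)
  have hc1 : c < 1 := by nlinarith
  have hc444 : (0.444:ℝ) < c := by nlinarith
  have hmono : StrictMonoOn gfun (Set.Ioc 0 c) := by
    apply strictMonoOn_of_deriv_pos (convex_Ioc 0 c) (gcont fun x hx => hx.1)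
    intro x hx
    rw [interior_Ioc] at hx
    obtain ⟨hx0, hxc⟩ := hx
    have hx1 : x < 1 := lt_trans hxc hc1
    rw [gfun_deriv_eq hx0 hx1]
    have hr2 : (0:ℝ) < 1 - x ^ 2 := by nlinarith
    have hs2 : Real.sqrt (1 - x ^ 2) ^ 2 = 1 - x ^ 2 := Real.sq_sqrt hr2.le
    have hs0 : 0 ≤ Real.sqrt (1 - x ^ 2) := Real.sqrt_nonneg _
    have hsx : x < Real.sqrt (1 - x ^ 2) := by nlinarith
    exact div_pos (by linarith) hx0
  have hanti : StrictAntiOn gfun (Set.Icc c 1) := by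
    apply strictAntiOn_of_deriv_neg (convex_Icc c 1) (gcont fun x hx => lt_of_lt_of_le hc0 hx.1)
    intro x hx
    rw [interior_Icc] at hx
    obtain ⟨hxc, hx1⟩ := hx
    have hx0 : 0 < x := lt_trans hc0 hxc
    rw [gfun_deriv_eq hx0 hx1]
    have hr2 : (0:ℝ) < 1 - x ^ 2 := by nlinarith
    have hs2 : Real.sqrt (1 - x ^ 2) ^ 2 = 1 - x ^ 2 := Real.sq_sqrt hr2.le
    have hs0 : 0 ≤ Real.sqrt (1 - x ^ 2) := Real.sqrt_nonneg _
    have hsx : Real.sqrt (1 - x ^ 2) < x := by nlinarith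
    exact div_neg_of_neg_of_pos (by linarith) hx0
  have g1 : gfun 1 = 0 := by
    unfold gfun
    norm_num
  have hsub : Set.Ioo (gfun 0.443) (gfun 0.444) ⊆ gfun '' Set.Ioo 0.443 0.444 :=
    intermediate_value_Ioo (by norm_num)
      (gcont fun x hx => lt_of_lt_of_le (by norm_num) hx.1)
  obtain ⟨r, hrmem, hgr⟩ := hsub ⟨gA, gB⟩
  obtain ⟨hr1, hr2⟩ := hrmem
  have hr01 : r ∈ Set.Ioo (0:ℝ) 1 := ⟨by linarith [show (0:ℝ) < 0.443 by norm_num],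
    by linarith [show (0.444:ℝ) < 1 by norm_num]⟩
  refine ⟨r, ⟨hr01, hgr⟩, ⟨hr1, hr2⟩, ?_⟩
  intro r' hr' hgr'
  have hgr'' : gfun r' = 0 := hgr'
  have hrc : r < c := by linarith
  rcases le_or_gt r' c with h | h
  · exact hmono.injOn ⟨hr'.1, h⟩ ⟨hr01.1, hrc.le⟩ (by rw [hgr'', hgr])
  · have hlt : gfun 1 < gfun r' := hanti ⟨h.le, hr'.2.le⟩ ⟨hc1.le, le_refl 1⟩ hr'.2
    rw [g1] at hlt
    linarith [hgr'' ▸ hlt]
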